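/- arXiv:1708.01453 — 5 statements merged into one kernel-verified Lean document; each statement's English description precedes it below -/
import Mathlib

section
/- Generalized orthogonality of the force decomposition (Lemma 1): for an irreducible finite Markov chain with invariant measure π > 0 and density ρ > 0, defining F^S_{xy}(ρ) = −(log(ρ(y)/π(y)) − log(ρ(x)/π(x))), F^A_{xy} = log(q_{xy}/q_{yx}) with q_{xy} = π(x) r_{xy}, and a_{xy}(ρ) = 2√(ρ(x) r_{xy} ρ(y) r_{yx}), one has ∑_{xy} sinh(F^S_{xy}(ρ)/2) · a_{xy}(ρ) · sinh(F^A_{xy}/2) = 0, where the sum is over directed edges xy with r_{xy} > 0. -/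
open Finset

lemma sinh_log_div_half (u v : ℝ) (hu : 0 < u) (hv : 0 < v) :
    Real.sinh (Real.log (u / v) / 2) = (u - v) / (2 * Real.sqrt u * Real.sqrt v) := by
  rw [← Real.log_sqrt (by positivity), Real.sinh_log (by positivity),
    Real.sqrt_div hu.le]
  have hsu : Real.sqrt u ^ 2 = u := Real.sq_sqrt hu.le
  have hsv : Real.sqrt v ^ 2 = v := Real.sq_sqrt hv.le
  have hsu0 : Real.sqrt u ≠ 0 := by positivity
  have hsv0 : Real.sqrt v ≠ 0 := by positivity
  rw [← hsu, ← hsv]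
  field_simp
  ring_nf
  rw [Real.sqrt_sq (Real.sqrt_nonneg u), Real.sqrt_sq (Real.sqrt_nonneg v)]

lemma key_term (u v q p : ℝ) (hu : 0 < u) (hv : 0 < v) (hq : 0 < q) (hp : 0 < p) :
    Real.sinh (Real.log (u / v) / 2) * (2 * Real.sqrt (u * v * (q * p))) *
      Real.sinh (Real.log (q / p) / 2) = (u - v) * (q - p) / 2 := by
  rw [sinh_log_div_half u v hu hv, sinh_log_div_half q p hq hp,
    show u * v * (q * p) = (u * v) * (q * p) by ring,
    Real.sqrt_mul (by positivity), Real.sqrt_mul hu.le, Real.sqrt_mul hq.le]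
  have hsu0 : Real.sqrt u ≠ 0 := by positivity
  have hsv0 : Real.sqrt v ≠ 0 := by positivity
  have hsq0 : Real.sqrt q ≠ 0 := by positivity
  have hsp0 : Real.sqrt p ≠ 0 := by positivity
  field_simp

/-- Lemma 1 (generalised orthogonality): for a finite Markov chain with invariant
probability measure `π > 0` and density `ρ > 0`, with
`F^S x y = -(log (ρ y / π y) - log (ρ x / π x))`, `F^A x y = log (q x y / q y x)`
(`q x y = π x * r x y`) and `a x y = 2 √(ρ x * r x y * ρ y * r y x)`, one has
`∑_{xy} sinh (F^S/2) * a * sinh (F^A/2) = 0`. -/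
theorem generalized_orthogonality_sum {V : Type*} [Fintype V]
    (r : V → V → ℝ) (π ρ : V → ℝ)
    (hr : ∀ x y, 0 ≤ r x y) (hsym : ∀ x y, 0 < r x y ↔ 0 < r y x)
    (hπpos : ∀ x, 0 < π x) (hρpos : ∀ x, 0 < ρ x)
    (hinv : ∀ x, ∑ y, π x * r x y = ∑ y, π y * r y x) :
    ∑ x, ∑ y,
      Real.sinh ((-(Real.log (ρ y / π y) - Real.log (ρ x / π x))) / 2) *
        (2 * Real.sqrt (ρ x * r x y * (ρ y * r y x))) *
        Real.sinh (Real.log ((π x * r x y) / (π y * r y x)) / 2) = 0 := by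
  have hterm : ∀ x y,
      Real.sinh ((-(Real.log (ρ y / π y) - Real.log (ρ x / π x))) / 2) *
        (2 * Real.sqrt (ρ x * r x y * (ρ y * r y x))) *
        Real.sinh (Real.log ((π x * r x y) / (π y * r y x)) / 2)
      = (ρ x / π x - ρ y / π y) * (π x * r x y - π y * r y x) / 2 := by
    intro x y
    rcases eq_or_lt_of_le (hr x y) with h0 | hpos
    · have h0' : r y x = 0 := by
        by_contra h
        exact absurd ((hsym x y).mpr (lt_of_le_of_ne (hr y x) (Ne.symm h))) (by rw [← h0]; exact lt_irrefl 0)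
      rw [← h0, h0']
      simp
    · have hpos' : 0 < r y x := (hsym x y).mp hpos
      have hlog : (-(Real.log (ρ y / π y) - Real.log (ρ x / π x))) =
          Real.log ((ρ x / π x) / (ρ y / π y)) := by
        rw [Real.log_div (div_pos (hρpos x) (hπpos x)).ne' (div_pos (hρpos y) (hπpos y)).ne']; ring
      rw [hlog]
      have harg : ρ x * r x y * (ρ y * r y x)
          = (ρ x / π x) * (ρ y / π y) * ((π x * r x y) * (π y * r y x)) := by
        field_simp [(hπpos x).ne', (hπpos y).ne']
      rw [harg]
      rw [key_term (ρ x / π x) (ρ y / π y) (π x * r x y) (π y * r y x)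
        (div_pos (hρpos x) (hπpos x)) (div_pos (hρpos y) (hπpos y))
        (mul_pos (hπpos x) hpos) (mul_pos (hπpos y) hpos')]
  simp only [hterm]
  have hrow : ∀ x, ∑ y, (π x * r x y - π y * r y x) = 0 := by
    intro x
    rw [Finset.sum_sub_distrib, hinv x, sub_self]
  calc ∑ x, ∑ y, (ρ x / π x - ρ y / π y) * (π x * r x y - π y * r y x) / 2
      = ∑ x, ∑ y, ((ρ x / π x) * (π x * r x y - π y * r y x) / 2
          - (ρ y / π y) * (π x * r x y - π y * r y x) / 2) := by
        apply Finset.sum_congr rfl; intro x _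
        apply Finset.sum_congr rfl; intro y _; ring
    _ = (∑ x, ∑ y, (ρ x / π x) * (π x * r x y - π y * r y x) / 2)
          - ∑ x, ∑ y, (ρ y / π y) * (π x * r x y - π y * r y x) / 2 := by
        rw [← Finset.sum_sub_distrib]
        exact Finset.sum_congr rfl fun x _ => by rw [Finset.sum_sub_distrib]
    _ = 0 - 0 := by
        congr 1
        · apply Finset.sum_eq_zero; intro x _
          have : ∑ y, (ρ x / π x) * (π x * r x y - π y * r y x) / 2
              = (ρ x / π x) * (∑ y, (π x * r x y - π y * r y x)) / 2 := by
            rw [Finset.mul_sum, Finset.sum_div]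
          rw [this, hrow x]; ring
        · rw [Finset.sum_comm]
          apply Finset.sum_eq_zero; intro y _
          have : ∑ x, (ρ y / π y) * (π x * r x y - π y * r y x) / 2
              = (ρ y / π y) * (∑ x, (π x * r x y - π y * r y x)) / 2 := by
            rw [Finset.mul_sum, Finset.sum_div]
          have hcol : ∑ x, (π x * r x y - π y * r y x) = 0 := by
            rw [Finset.sum_sub_distrib, ← hinv y, sub_self]
          rw [this, hcol]; ring
    _ = 0 := by ring
end

section
/- Splitting of Ψ* (Lemma 2): under the setting of Lemma 1, with Ψ*(ρ, f) = ∑_{xy} a_{xy}(ρ)(cosh(f_{xy}/2) − 1), Ψ*_S(ρ, f) = ∑_{xy} a^S_{xy}(ρ)(cosh(f_{xy}/2) − 1) where a^S_{xy}(ρ) = a_{xy}(ρ) cosh(F^A_{xy}/2), and F(ρ) = F^S(ρ) + F^A, one has Ψ*(ρ, F(ρ)) = Ψ*_S(ρ, F^S(ρ)) + Ψ*(ρ, F^A). -/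
open Finset

lemma sinh_log_div' (A B : ℝ) (hA : 0 < A) (hB : 0 < B) :
    Real.sinh (Real.log (A / B) / 2) = (A - B) / (2 * Real.sqrt (A * B)) := by
  have hAB : 0 < A / B := div_pos hA hB
  have h1 : Real.log (A / B) / 2 = Real.log (Real.sqrt (A / B)) := by
    rw [Real.log_sqrt hAB.le]
  rw [h1, Real.sinh_log (Real.sqrt_pos.mpr hAB)]
  have hsA : (0:ℝ) < Real.sqrt A := Real.sqrt_pos.mpr hA
  have hsB : (0:ℝ) < Real.sqrt B := Real.sqrt_pos.mpr hB
  have hdiv : Real.sqrt (A / B) = Real.sqrt A / Real.sqrt B := Real.sqrt_div hA.le B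
  have hmul : Real.sqrt (A * B) = Real.sqrt A * Real.sqrt B := Real.sqrt_mul hA.le B
  have hA2 : Real.sqrt A * Real.sqrt A = A := Real.mul_self_sqrt hA.le
  have hB2 : Real.sqrt B * Real.sqrt B = B := Real.mul_self_sqrt hB.le
  rw [hdiv, hmul, inv_div]
  field_simp
  rw [sq, sq, hA2, hB2]

lemma key_prod (p q b c u v : ℝ) (hp : 0 < p) (hq : 0 < q) (hb : 0 < b) (hc : 0 < c)
    (hu : 0 ≤ u) (hv : 0 ≤ v) (huv : 0 < u ↔ 0 < v) :
    2 * Real.sqrt (p * u * (q * v)) * Real.sinh (Real.log (p * c / (q * b)) / 2) *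
      Real.sinh (Real.log (b * u / (c * v)) / 2)
      = (p * c - q * b) * (b * u - c * v) / (2 * (b * c)) := by
  rcases eq_or_lt_of_le hu with hu0 | hu0
  · have hv0 : v = 0 := by
      by_contra h
      have : 0 < v := lt_of_le_of_ne hv (Ne.symm h)
      exact absurd (huv.mpr this) (by rw [← hu0]; exact lt_irrefl 0)
    rw [← hu0, hv0]
    simp
  · have hv0 : 0 < v := huv.mp hu0
    have h1 := sinh_log_div' (p * c) (q * b) (mul_pos hp hc) (mul_pos hq hb)
    have h2 := sinh_log_div' (b * u) (c * v) (mul_pos hb hu0) (mul_pos hc hv0)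
    rw [h1, h2]
    have hS : 0 < Real.sqrt (p * u * (q * v)) :=
      Real.sqrt_pos.mpr (mul_pos (mul_pos hp hu0) (mul_pos hq hv0))
    have hM : 0 < Real.sqrt (p * c * (q * b)) :=
      Real.sqrt_pos.mpr (mul_pos (mul_pos hp hc) (mul_pos hq hb))
    have hN : 0 < Real.sqrt (b * u * (c * v)) :=
      Real.sqrt_pos.mpr (mul_pos (mul_pos hb hu0) (mul_pos hc hv0))
    have hprod : Real.sqrt (p * c * (q * b)) * Real.sqrt (b * u * (c * v))
        = Real.sqrt (p * u * (q * v)) * (b * c) := by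
      rw [← Real.sqrt_mul (by positivity) (b * u * (c * v))]
      have : p * c * (q * b) * (b * u * (c * v)) = p * u * (q * v) * (b * c) ^ 2 := by ring
      rw [this, Real.sqrt_mul (by positivity) ((b * c) ^ 2),
        Real.sqrt_sq (by positivity)]
    set S := Real.sqrt (p * u * (q * v)) with hSdef
    set M := Real.sqrt (p * c * (q * b)) with hMdef
    set N := Real.sqrt (b * u * (c * v)) with hNdef
    have hbc : (0:ℝ) < b * c := mul_pos hb hc
    field_simp
    linear_combination (-(p * c - q * b) * (b * u - c * v)) * hprod

/-- Lemma 2 (splitting of `Ψ*`): with `Ψ*(ρ,f) = ∑_{xy} a_{xy}(ρ)(cosh(f_{xy}/2) - 1)`,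
`Ψ*_S(ρ,f) = ∑_{xy} a^S_{xy}(ρ)(cosh(f_{xy}/2) - 1)` where
`a^S_{xy}(ρ) = a_{xy}(ρ) cosh(F^A_{xy}/2)`, and `F(ρ) = F^S(ρ) + F^A`, one has
`Ψ*(ρ,F(ρ)) = Ψ*_S(ρ,F^S(ρ)) + Ψ*(ρ,F^A)`. -/
theorem psistar_splitting {V : Type*} [Fintype V]
    (r : V → V → ℝ) (π ρ : V → ℝ)
    (hr : ∀ x y, 0 ≤ r x y) (hsym : ∀ x y, 0 < r x y ↔ 0 < r y x)
    (hπpos : ∀ x, 0 < π x) (hρpos : ∀ x, 0 < ρ x)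
    (hinv : ∀ x, ∑ y, π x * r x y = ∑ y, π y * r y x)
    -- mobility, symmetric force, antisymmetric force
    (a FS FA : V → V → ℝ)
    (ha : ∀ x y, a x y = 2 * Real.sqrt (ρ x * r x y * (ρ y * r y x)))
    (hFS : ∀ x y, FS x y = Real.log (ρ x * π y / (ρ y * π x)))
    (hFA : ∀ x y, FA x y = Real.log ((π x * r x y) / (π y * r y x))) :
    ∑ x, ∑ y, a x y * (Real.cosh ((FS x y + FA x y) / 2) - 1) =
      (∑ x, ∑ y, (a x y * Real.cosh (FA x y / 2)) * (Real.cosh (FS x y / 2) - 1))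
        + ∑ x, ∑ y, a x y * (Real.cosh (FA x y / 2) - 1) := by
  -- orthogonality
  have horth : ∑ x, ∑ y, a x y * Real.sinh (FS x y / 2) * Real.sinh (FA x y / 2) = 0 := by
    have hterm : ∀ x y, a x y * Real.sinh (FS x y / 2) * Real.sinh (FA x y / 2)
        = (ρ x * π y - ρ y * π x) * (π x * r x y - π y * r y x) / (2 * (π x * π y)) := by
      intro x y
      rw [ha, hFS, hFA]
      exact key_prod (ρ x) (ρ y) (π x) (π y) (r x y) (r y x)
        (hρpos x) (hρpos y) (hπpos x) (hπpos y) (hr x y) (hr y x) (hsym x y)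
    simp only [hterm]
    have hsplit : ∀ x y : V, (ρ x * π y - ρ y * π x) * (π x * r x y - π y * r y x) /
        (2 * (π x * π y))
        = ρ x * r x y / 2 + ρ y * r y x / 2
          - ρ x * π y * r y x / (2 * π x) - ρ y * π x * r x y / (2 * π y) := by
      intro x y
      have hx := (hπpos x).ne'
      have hy := (hπpos y).ne'
      field_simp
      ring
    simp only [hsplit]
    have e1 : ∑ x, ∑ y, (ρ x * r x y / 2 + ρ y * r y x / 2
        - ρ x * π y * r y x / (2 * π x) - ρ y * π x * r x y / (2 * π y))
        = (∑ x, ∑ y, ρ x * r x y / 2) + (∑ x, ∑ y, ρ y * r y x / 2)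
          - (∑ x, ∑ y, ρ x * π y * r y x / (2 * π x))
          - (∑ x, ∑ y, ρ y * π x * r x y / (2 * π y)) := by
      simp [Finset.sum_add_distrib, Finset.sum_sub_distrib]
    rw [e1]
    have e2 : (∑ x, ∑ y, ρ y * r y x / 2) = ∑ x, ∑ y, ρ x * r x y / 2 :=
      Finset.sum_comm
    have e3 : (∑ x, ∑ y, ρ y * π x * r x y / (2 * π y))
        = ∑ x, ∑ y, ρ x * π y * r y x / (2 * π x) := Finset.sum_comm
    have e4 : (∑ x, ∑ y, ρ x * π y * r y x / (2 * π x)) = ∑ x, ∑ y, ρ x * r x y / 2 := by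
      apply Finset.sum_congr rfl
      intro x _
      have hx := (hπpos x).ne'
      have : ∑ y, ρ x * π y * r y x / (2 * π x)
          = (∑ y, π y * r y x) * (ρ x / (2 * π x)) := by
        rw [Finset.sum_mul]
        apply Finset.sum_congr rfl
        intro y _
        field_simp
      rw [this, ← hinv x, Finset.sum_mul]
      apply Finset.sum_congr rfl
      intro y _
      field_simp
    rw [e2, e3, e4]
    ring
  have hcosh : ∀ x y : V, a x y * (Real.cosh ((FS x y + FA x y) / 2) - 1)
      = (a x y * Real.cosh (FA x y / 2)) * (Real.cosh (FS x y / 2) - 1)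
        + a x y * (Real.cosh (FA x y / 2) - 1)
        + a x y * Real.sinh (FS x y / 2) * Real.sinh (FA x y / 2) := by
    intro x y
    have h : (FS x y + FA x y) / 2 = FS x y / 2 + FA x y / 2 := by ring
    rw [h, Real.cosh_add]
    ring
  calc ∑ x, ∑ y, a x y * (Real.cosh ((FS x y + FA x y) / 2) - 1)
      = ∑ x, ∑ y, ((a x y * Real.cosh (FA x y / 2)) * (Real.cosh (FS x y / 2) - 1)
          + a x y * (Real.cosh (FA x y / 2) - 1)
          + a x y * Real.sinh (FS x y / 2) * Real.sinh (FA x y / 2)) := by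
        simp only [hcosh]
    _ = (∑ x, ∑ y, (a x y * Real.cosh (FA x y / 2)) * (Real.cosh (FS x y / 2) - 1))
          + (∑ x, ∑ y, a x y * (Real.cosh (FA x y / 2) - 1))
          + ∑ x, ∑ y, a x y * Real.sinh (FS x y / 2) * Real.sinh (FA x y / 2) := by
        simp [Finset.sum_add_distrib]
    _ = _ := by rw [horth]; ring
end

section
/- Generalized orthogonality of forces (Proposition 1): under the setting of Lemma 1, Ψ*(ρ, F^S(ρ) + F^A) = Ψ*(ρ, F^S(ρ) − F^A), where Ψ*(ρ, f) = ∑_{xy} a_{xy}(ρ)(cosh(f_{xy}/2) − 1). -/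
open Finset

/-- Proposition 1 (generalised orthogonality of forces):
`Ψ*(ρ, F^S(ρ) + F^A) = Ψ*(ρ, F^S(ρ) - F^A)` where
`Ψ*(ρ, f) = ∑_{xy} a_{xy}(ρ)(cosh(f_{xy}/2) - 1)`. -/
theorem generalized_orthogonality_forces {V : Type*} [Fintype V]
    (r : V → V → ℝ) (π ρ : V → ℝ)
    (hr : ∀ x y, 0 ≤ r x y) (hsym : ∀ x y, 0 < r x y ↔ 0 < r y x)
    (hπpos : ∀ x, 0 < π x) (hρpos : ∀ x, 0 < ρ x)
    (hinv : ∀ x, ∑ y, π x * r x y = ∑ y, π y * r y x)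
    (a FS FA : V → V → ℝ)
    (ha : ∀ x y, a x y = 2 * Real.sqrt (ρ x * r x y * (ρ y * r y x)))
    (hFS : ∀ x y, FS x y = Real.log (ρ x * π y / (ρ y * π x)))
    (hFA : ∀ x y, FA x y = Real.log ((π x * r x y) / (π y * r y x))) :
    ∑ x, ∑ y, a x y * (Real.cosh ((FS x y + FA x y) / 2) - 1) =
      ∑ x, ∑ y, a x y * (Real.cosh ((FS x y - FA x y) / 2) - 1) := by
  -- The pointwise difference of the two integrands
  have key : ∀ x y, a x y * (Real.cosh ((FS x y + FA x y) / 2) - 1)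
      = a x y * (Real.cosh ((FS x y - FA x y) / 2) - 1)
        + ((ρ x * r x y - ρ x / π x * (π y * r y x))
          + (ρ y * r y x - ρ y / π y * (π x * r x y))) := by
    intro x y
    by_cases hxy : 0 < r x y
    · have hyx : 0 < r y x := (hsym x y).mp hxy
      have hpx := hπpos x; have hpy := hπpos y
      have hrx := hρpos x; have hry := hρpos y
      rw [ha, hFS, hFA]
      have hA : (0:ℝ) < ρ x * π y / (ρ y * π x) := by positivity
      have hB : (0:ℝ) < π x * r x y / (π y * r y x) := by positivity
      have h2 : (Real.log (ρ x * π y / (ρ y * π x))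
            + Real.log (π x * r x y / (π y * r y x))) / 2
          = Real.log (Real.sqrt (ρ x * π y / (ρ y * π x)))
            + Real.log (Real.sqrt (π x * r x y / (π y * r y x))) := by
        rw [Real.log_sqrt hA.le, Real.log_sqrt hB.le]; ring
      have h3 : (Real.log (ρ x * π y / (ρ y * π x))
            - Real.log (π x * r x y / (π y * r y x))) / 2
          = Real.log (Real.sqrt (ρ x * π y / (ρ y * π x)))
            - Real.log (Real.sqrt (π x * r x y / (π y * r y x))) := by
        rw [Real.log_sqrt hA.le, Real.log_sqrt hB.le]; ring
      have hsA : (0:ℝ) < Real.sqrt (ρ x * π y / (ρ y * π x)) := Real.sqrt_pos.mpr hA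
      have hsB : (0:ℝ) < Real.sqrt (π x * r x y / (π y * r y x)) := Real.sqrt_pos.mpr hB
      rw [h2, h3, Real.cosh_add, Real.cosh_sub, Real.cosh_log hsA, Real.cosh_log hsB,
        Real.sinh_log hsA, Real.sinh_log hsB]
      have s1 : Real.sqrt (ρ x * r x y * (ρ y * r y x))
          = Real.sqrt (ρ x) * Real.sqrt (r x y) * (Real.sqrt (ρ y) * Real.sqrt (r y x)) := by
        rw [Real.sqrt_mul (by positivity), Real.sqrt_mul hrx.le, Real.sqrt_mul hry.le]
      have s2 : Real.sqrt (ρ x * π y / (ρ y * π x))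
          = Real.sqrt (ρ x) * Real.sqrt (π y) / (Real.sqrt (ρ y) * Real.sqrt (π x)) := by
        rw [Real.sqrt_div (by positivity), Real.sqrt_mul hrx.le, Real.sqrt_mul hry.le]
      have s3 : Real.sqrt (π x * r x y / (π y * r y x))
          = Real.sqrt (π x) * Real.sqrt (r x y) / (Real.sqrt (π y) * Real.sqrt (r y x)) := by
        rw [Real.sqrt_div (by positivity), Real.sqrt_mul hpx.le, Real.sqrt_mul hpy.le]
      rw [s1, s2, s3]
      set p := Real.sqrt (ρ x) with hpdef
      set q := Real.sqrt (ρ y) with hqdef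
      set s := Real.sqrt (π x) with hsdef
      set t := Real.sqrt (π y) with htdef
      set u := Real.sqrt (r x y) with hudef
      set v := Real.sqrt (r y x) with hvdef
      have hp : (0:ℝ) < p := Real.sqrt_pos.mpr hrx
      have hq : (0:ℝ) < q := Real.sqrt_pos.mpr hry
      have hs : (0:ℝ) < s := Real.sqrt_pos.mpr hpx
      have ht : (0:ℝ) < t := Real.sqrt_pos.mpr hpy
      have hu : (0:ℝ) < u := Real.sqrt_pos.mpr hxy
      have hv : (0:ℝ) < v := Real.sqrt_pos.mpr hyx
      have e1 : ρ x = p ^ 2 := (Real.sq_sqrt hrx.le).symm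
      have e2 : ρ y = q ^ 2 := (Real.sq_sqrt hry.le).symm
      have e3 : π x = s ^ 2 := (Real.sq_sqrt hpx.le).symm
      have e4 : π y = t ^ 2 := (Real.sq_sqrt hpy.le).symm
      have e5 : r x y = u ^ 2 := (Real.sq_sqrt (hr x y)).symm
      have e6 : r y x = v ^ 2 := (Real.sq_sqrt (hr y x)).symm
      rw [e1, e2, e3, e4, e5, e6]
      field_simp
      ring
    · have hxy0 : r x y = 0 := le_antisymm (not_lt.mp hxy) (hr x y)
      have hyx0 : r y x = 0 := by
        by_contra h
        exact hxy ((hsym x y).mpr (lt_of_le_of_ne (hr y x) (Ne.symm h)))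
      simp [ha, hxy0, hyx0]
  -- Sum it up
  simp only [key, Finset.sum_add_distrib]
  have h1 : ∑ x, ∑ y, (ρ x * r x y - ρ x / π x * (π y * r y x)) = 0 := by
    apply Finset.sum_eq_zero
    intro x _
    rw [Finset.sum_sub_distrib, ← Finset.mul_sum, ← Finset.mul_sum]
    have : ∑ y, r x y = (1 / π x) * ∑ y, π x * r x y := by
      rw [← Finset.mul_sum, ← mul_assoc, one_div, inv_mul_cancel₀ (hπpos x).ne', one_mul]
    rw [sub_eq_zero]
    calc ρ x * ∑ y, r x y = ρ x / π x * ∑ y, π x * r x y := by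
          rw [this]; ring
      _ = ρ x / π x * ∑ y, π y * r y x := by rw [hinv x]
  have h2 : ∑ x, ∑ y, (ρ y * r y x - ρ y / π y * (π x * r x y)) = 0 := by
    rw [Finset.sum_comm]
    exact h1
  rw [h1, h2]
  ring
end

section
/- Decomposition of the Onsager–Machlup functional (Corollary 1): define Φ(ρ, j, f) = Ψ(ρ, j) − j·f + Ψ*(ρ, f) with the pairing j·f = (1/2)∑_{xy} j_{xy} f_{xy}, and D(ρ, j) = (1/2)∑_{xy} j_{xy} log(ρ(y)π(x)/(ρ(x)π(y))). Then Φ(ρ, j, F(ρ)) = D(ρ, j) + Φ_S(ρ, 0, F^S(ρ)) + Φ(ρ, j, F^A), where Φ_S is defined like Φ with Ψ, Ψ* replaced by Ψ_S, Ψ*_S (mobility a^S_{xy}(ρ) = a_{xy}(ρ)cosh(F^A_{xy}/2)), and Φ_S(ρ,0,F^S(ρ)) = Ψ*_S(ρ, F^S(ρ)). -/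
open Finset

/-- Dual pairing `j·f = (1/2) ∑_{xy} j_{xy} f_{xy}` on directed edges. -/
noncomputable def pairF {V : Type*} [Fintype V] (j f : V → V → ℝ) : ℝ :=
  (1 / 2) * ∑ x, ∑ y, j x y * f x y

/-- `Ψ*(ρ, f) = ∑_{xy} a_{xy}(ρ) (cosh (f_{xy}/2) - 1)` for given mobility `a`. -/
noncomputable def PsiStar {V : Type*} [Fintype V] (a f : V → V → ℝ) : ℝ :=
  ∑ x, ∑ y, a x y * (Real.cosh (f x y / 2) - 1)

/-- `Ψ(ρ, j) = sup_g (j·g - Ψ*(ρ, g))`, the Legendre dual of `Ψ*`. -/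
noncomputable def PsiL {V : Type*} [Fintype V] (a j : V → V → ℝ) : ℝ :=
  ⨆ g : V → V → ℝ, (pairF j g - PsiStar a g)

/-- The Onsager–Machlup functional `Φ(ρ, j, f) = Ψ(ρ,j) - j·f + Ψ*(ρ,f)`. -/
noncomputable def PhiOM {V : Type*} [Fintype V] (a j f : V → V → ℝ) : ℝ :=
  PsiL a j - pairF j f + PsiStar a f

lemma exp_half_log (u : ℝ) (hu : 0 < u) : Real.exp (Real.log u / 2) = Real.sqrt u := by
  rw [Real.sqrt_eq_rpow, Real.rpow_def_of_pos hu]; ring_nf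

lemma sinh_log_div (u w : ℝ) (hu : 0 < u) (hw : 0 < w) :
    Real.sinh (Real.log (u / w) / 2) = (u - w) / (2 * Real.sqrt (u * w)) := by
  have hsu := Real.sqrt_pos.mpr hu
  have hsw := Real.sqrt_pos.mpr hw
  have h1 : Real.exp (Real.log (u / w) / 2) = Real.sqrt u / Real.sqrt w := by
    rw [exp_half_log _ (div_pos hu hw), Real.sqrt_div hu.le]
  have h2 : Real.exp (-(Real.log (u / w) / 2)) = Real.sqrt w / Real.sqrt u := by
    have h3 : -(Real.log (u / w) / 2) = Real.log (w / u) / 2 := by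
      rw [Real.log_div hu.ne' hw.ne', Real.log_div hw.ne' hu.ne']; ring
    rw [h3, exp_half_log _ (div_pos hw hu), Real.sqrt_div hw.le]
  have hu2 : Real.sqrt u * Real.sqrt u = u := Real.mul_self_sqrt hu.le
  have hw2 : Real.sqrt w * Real.sqrt w = w := Real.mul_self_sqrt hw.le
  rw [Real.sinh_eq, h1, h2, Real.sqrt_mul hu.le,
    div_sub_div _ _ hsw.ne' hsu.ne', hu2, hw2]
  ring

lemma term_eq (A B P Q R S : ℝ) (hA : 0 < A) (hB : 0 < B) (hP : 0 < P) (hQ : 0 < Q)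
    (hR : 0 ≤ R) (hS : 0 ≤ S) (hRS : 0 < R ↔ 0 < S) :
    2 * Real.sqrt (A * R * (B * S)) * Real.sinh (Real.log (A * Q / (B * P)) / 2) *
      Real.sinh (Real.log (P * R / (Q * S)) / 2) =
    (1 / 2) * ((A * Q - B * P) * (P * R - Q * S) / (P * Q)) := by
  rcases eq_or_lt_of_le hR with h | hRpos
  · have hS0 : S = 0 := by
      by_contra h'
      exact absurd (hRS.mpr (lt_of_le_of_ne hS (Ne.symm h'))) (by rw [← h]; exact lt_irrefl 0)
    rw [← h, hS0]
    simp
  · have hSpos : S > 0 := hRS.mp hRpos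
    have h1 := sinh_log_div (A * Q) (B * P) (mul_pos hA hQ) (mul_pos hB hP)
    have h2 := sinh_log_div (P * R) (Q * S) (mul_pos hP hRpos) (mul_pos hQ hSpos)
    rw [h1, h2]
    have key : Real.sqrt (A * Q * (B * P)) * Real.sqrt (P * R * (Q * S)) =
        Real.sqrt (A * R * (B * S)) * (P * Q) := by
      rw [← Real.sqrt_mul (by positivity)]
      have : A * Q * (B * P) * (P * R * (Q * S)) = A * R * (B * S) * (P * Q) ^ 2 := by ring
      rw [this, Real.sqrt_mul (by positivity), Real.sqrt_sq (by positivity)]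
    have hX : (0:ℝ) < Real.sqrt (A * R * (B * S)) := Real.sqrt_pos.mpr (by positivity)
    have hc : Real.sqrt (A * R * (B * S)) / (Real.sqrt (A * R * (B * S)) * (P * Q)) =
        1 / (P * Q) := by
      rw [div_mul_eq_div_div, div_self hX.ne']
    calc 2 * Real.sqrt (A * R * (B * S)) *
          ((A * Q - B * P) / (2 * Real.sqrt (A * Q * (B * P)))) *
          ((P * R - Q * S) / (2 * Real.sqrt (P * R * (Q * S))))
        = Real.sqrt (A * R * (B * S)) /
            (Real.sqrt (A * Q * (B * P)) * Real.sqrt (P * R * (Q * S))) *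
            ((A * Q - B * P) * (P * R - Q * S) / 2) := by ring
      _ = Real.sqrt (A * R * (B * S)) / (Real.sqrt (A * R * (B * S)) * (P * Q)) *
            ((A * Q - B * P) * (P * R - Q * S) / 2) := by rw [key]
      _ = 1 / (P * Q) * ((A * Q - B * P) * (P * R - Q * S) / 2) := by rw [hc]
      _ = (1 / 2) * ((A * Q - B * P) * (P * R - Q * S) / (P * Q)) := by ring


/-- Corollary 1 (decomposition of the OM functional):
`Φ(ρ, j, F(ρ)) = D(ρ,j) + Φ_S(ρ, 0, F^S(ρ)) + Φ(ρ, j, F^A)`, where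
`D(ρ,j) = (1/2)∑_{xy} j_{xy} log (ρ(y)π(x)/(ρ(x)π(y)))` and `Φ_S` uses the
symmetric mobility `a^S_{xy} = a_{xy} cosh (F^A_{xy}/2)`. -/
theorem OM_functional_decomposition {V : Type*} [Fintype V]
    (r : V → V → ℝ) (π ρ : V → ℝ) (j : V → V → ℝ)
    (hr : ∀ x y, 0 ≤ r x y) (hsym : ∀ x y, 0 < r x y ↔ 0 < r y x)
    (hπpos : ∀ x, 0 < π x) (hρpos : ∀ x, 0 < ρ x)
    (hinv : ∀ x, ∑ y, π x * r x y = ∑ y, π y * r y x)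
    (hjanti : ∀ x y, j x y = - j y x)
    (a aS FS FA : V → V → ℝ)
    (ha : ∀ x y, a x y = 2 * Real.sqrt (ρ x * r x y * (ρ y * r y x)))
    (haS : ∀ x y, aS x y = a x y * Real.cosh (FA x y / 2))
    (hFS : ∀ x y, FS x y = Real.log (ρ x * π y / (ρ y * π x)))
    (hFA : ∀ x y, FA x y = Real.log ((π x * r x y) / (π y * r y x))) :
    PhiOM a j (fun x y => FS x y + FA x y) =
      ((1 / 2) * ∑ x, ∑ y, j x y * Real.log (ρ y * π x / (ρ x * π y)))
        + PhiOM aS (fun _ _ => (0 : ℝ)) FS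
        + PhiOM a j FA := by
  classical
  -- Step A : pairF j FS = - D
  have hpair : pairF j FS =
      -((1 / 2) * ∑ x, ∑ y, j x y * Real.log (ρ y * π x / (ρ x * π y))) := by
    unfold pairF
    have hpt : ∀ x y, j x y * FS x y = -(j x y * Real.log (ρ y * π x / (ρ x * π y))) := by
      intro x y
      have h1 : Real.log (ρ x * π y / (ρ y * π x)) =
          -Real.log (ρ y * π x / (ρ x * π y)) := by
        have hxy : ρ x * π y ≠ 0 := (mul_pos (hρpos x) (hπpos y)).ne'
        have hyx : ρ y * π x ≠ 0 := (mul_pos (hρpos y) (hπpos x)).ne'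
        rw [Real.log_div hxy hyx, Real.log_div hyx hxy]
        ring
      rw [hFS, h1]; ring
    rw [show (∑ x, ∑ y, j x y * FS x y)
        = ∑ x, ∑ y, -(j x y * Real.log (ρ y * π x / (ρ x * π y))) from
      Finset.sum_congr rfl fun x _ => Finset.sum_congr rfl fun y _ => hpt x y]
    simp [Finset.sum_neg_distrib]
  -- Step B : PsiL aS 0 = 0
  have haSnn : ∀ x y, 0 ≤ aS x y := by
    intro x y
    rw [haS]
    exact mul_nonneg (by rw [ha]; positivity) (Real.cosh_pos _).le
  have hub : ∀ g : V → V → ℝ, pairF (fun _ _ => (0:ℝ)) g - PsiStar aS g ≤ 0 := by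
    intro g
    have h0 : pairF (fun _ _ => (0:ℝ)) g = 0 := by simp [pairF]
    have h1 : 0 ≤ PsiStar aS g :=
      Finset.sum_nonneg fun x _ => Finset.sum_nonneg fun y _ =>
        mul_nonneg (haSnn x y) (by linarith [Real.one_le_cosh (g x y / 2)])
    rw [h0]; linarith
  have hPsiL0 : PsiL aS (fun _ _ => (0:ℝ)) = 0 := by
    unfold PsiL
    apply le_antisymm
    · exact _root_.ciSup_le hub
    have hmem : pairF (fun _ _ => (0:ℝ)) (fun (_ _ : V) => (0:ℝ))
        - PsiStar aS (fun _ _ => (0:ℝ)) = 0 := by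
      simp [pairF, PsiStar]
    have hbdd : BddAbove (Set.range fun g : V → V → ℝ =>
        pairF (fun _ _ => (0:ℝ)) g - PsiStar aS g) := by
      refine ⟨0, ?_⟩
      rintro _ ⟨g, rfl⟩
      exact hub g
    calc (0:ℝ) = pairF (fun _ _ => (0:ℝ)) (fun (_ _ : V) => (0:ℝ))
          - PsiStar aS (fun _ _ => (0:ℝ)) := hmem.symm
      _ ≤ _ := _root_.le_ciSup hbdd (fun (_ _ : V) => (0:ℝ))
  -- Step C : splitting of PsiStar
  have hS2 : ∑ x, ∑ y, ρ x / π x * (π y * r y x) = ∑ x, ∑ y, ρ x * r x y := by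
    refine Finset.sum_congr rfl fun x _ => ?_
    rw [← Finset.mul_sum, ← hinv x, Finset.mul_sum]
    refine Finset.sum_congr rfl fun y _ => ?_
    field_simp [(hπpos x).ne']
  have hS3 : ∑ x, ∑ y, ρ y / π y * (π x * r x y) = ∑ x, ∑ y, ρ x * r x y := by
    rw [Finset.sum_comm]; exact hS2
  have hS1 : ∑ x, ∑ y, ρ y * r y x = ∑ x, ∑ y, ρ x * r x y := Finset.sum_comm
  have hzero : ∑ x, ∑ y, a x y * Real.sinh (FS x y / 2) * Real.sinh (FA x y / 2) = 0 := by
    have hpt : ∀ x y, a x y * Real.sinh (FS x y / 2) * Real.sinh (FA x y / 2)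
        = (1/2) * (ρ x * r x y) - (1/2) * (ρ x / π x * (π y * r y x))
          - (1/2) * (ρ y / π y * (π x * r x y)) + (1/2) * (ρ y * r y x) := by
      intro x y
      have h := term_eq (ρ x) (ρ y) (π x) (π y) (r x y) (r y x)
        (hρpos x) (hρpos y) (hπpos x) (hπpos y) (hr x y) (hr y x) (hsym x y)
      rw [ha, hFS, hFA, h]
      have hπx := (hπpos x).ne'
      have hπy := (hπpos y).ne'
      field_simp
      ring
    rw [show (∑ x, ∑ y, a x y * Real.sinh (FS x y / 2) * Real.sinh (FA x y / 2))
        = ∑ x, ∑ y, ((1/2) * (ρ x * r x y) - (1/2) * (ρ x / π x * (π y * r y x))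
          - (1/2) * (ρ y / π y * (π x * r x y)) + (1/2) * (ρ y * r y x)) from
      Finset.sum_congr rfl fun x _ => Finset.sum_congr rfl fun y _ => hpt x y]
    have pull : ∀ f : V → V → ℝ, (∑ x, ∑ y, (1/2 : ℝ) * f x y) = (1/2) * ∑ x, ∑ y, f x y := by
      intro f
      rw [Finset.mul_sum]
      exact Finset.sum_congr rfl fun x _ => (Finset.mul_sum _ _ _).symm
    simp only [Finset.sum_add_distrib, Finset.sum_sub_distrib]
    rw [pull, pull, pull, pull, hS1, hS2, hS3]
    ring
  have hsplit : PsiStar a (fun x y => FS x y + FA x y) = PsiStar aS FS + PsiStar a FA := by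
    unfold PsiStar
    have hpt : ∀ x y, a x y * (Real.cosh ((FS x y + FA x y) / 2) - 1)
        = aS x y * (Real.cosh (FS x y / 2) - 1) + a x y * (Real.cosh (FA x y / 2) - 1)
          + a x y * Real.sinh (FS x y / 2) * Real.sinh (FA x y / 2) := by
      intro x y
      rw [haS, show (FS x y + FA x y) / 2 = FS x y / 2 + FA x y / 2 from by ring,
        Real.cosh_add]
      ring
    rw [show (∑ x, ∑ y, a x y * (Real.cosh ((FS x y + FA x y) / 2) - 1))
        = ∑ x, ∑ y, (aS x y * (Real.cosh (FS x y / 2) - 1)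
          + a x y * (Real.cosh (FA x y / 2) - 1)
          + a x y * Real.sinh (FS x y / 2) * Real.sinh (FA x y / 2)) from
      Finset.sum_congr rfl fun x _ => Finset.sum_congr rfl fun y _ => hpt x y]
    simp only [Finset.sum_add_distrib]
    rw [hzero]
    ring
  -- Step D : additivity of the pairing
  have hadd : pairF j (fun x y => FS x y + FA x y) = pairF j FS + pairF j FA := by
    simp only [pairF, mul_add, Finset.sum_add_distrib]
  have hp0 : pairF (fun _ _ => (0:ℝ)) FS = 0 := by simp [pairF]
  -- assemble
  unfold PhiOM
  rw [hadd, hsplit, hPsiL0, hpair, hp0]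
  ring
end

section
/- Finite-time Gallavotti–Cohen symmetry of the rate function: with I_{[0,T]}((ρ, j)) = F(ρ_0) + (1/2)∫_0^T Φ(ρ_t, j_t, F(ρ_t)) dt (for paths with ρ̇ + div j = 0) and the time-reversed path (ρ*_t, j*_t) = (ρ_{T−t}, −j_{T−t}), one has I_{[0,T]}((ρ, j)) − I_{[0,T]}((ρ*, j*)) = F(ρ_0) − F(ρ_T) − ∫_0^T j_t · F(ρ_t) dt. -/
open Finset intervalIntegral

/-- Finite-time Gallavotti–Cohen symmetry: for the pathwise rate functional
`I = 𝓕(ρ_0) + (1/2)∫_0^T Φ(ρ_t, j_t, F(ρ_t)) dt` with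
`Φ(ρ,j,f) = Ψ(ρ,j) - j·f + Ψ*(ρ,f)` and `Ψ, Ψ*` even in their second argument,
the difference between the rate functional of a path and of its time-reversal
`(ρ*_t, j*_t) = (ρ_{T-t}, -j_{T-t})` equals
`𝓕(ρ_0) - 𝓕(ρ_T) - ∫_0^T j_t · F(ρ_t) dt`. -/
theorem gallavotti_cohen_finite_time {V : Type*} [Fintype V]
    (r : V → V → ℝ) (π : V → ℝ)
    (hr : ∀ x y, 0 ≤ r x y) (hsym : ∀ x y, 0 < r x y ↔ 0 < r y x)
    (hπpos : ∀ x, 0 < π x)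
    (Psi PsiStar : (V → ℝ) → (V → V → ℝ) → ℝ)
    (hPsiEven : ∀ μ u, Psi μ (fun x y => -(u x y)) = Psi μ u)
    (hPsiStarEven : ∀ μ u, PsiStar μ (fun x y => -(u x y)) = PsiStar μ u)
    (T : ℝ) (hT : 0 ≤ T)
    (ρ : ℝ → V → ℝ) (j : ℝ → V → V → ℝ)
    (hρpos : ∀ t x, 0 < ρ t x)
    (hjanti : ∀ t x y, j t x y = - j t y x)
    (hcontinuity : ∀ t x, HasDerivAt (fun s => ρ s x) (-∑ y, j t x y) t)
    -- regularity ensuring integrability of all the integrands along the path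
    (hc1 : Continuous fun t => Psi (ρ t) (j t))
    (hc2 : Continuous fun t =>
      PsiStar (ρ t) (fun x y => Real.log (ρ t x * r x y / (ρ t y * r y x))))
    (hc3 : Continuous fun t =>
      pairF (j t) (fun x y => Real.log (ρ t x * r x y / (ρ t y * r y x)))) :
    ((∑ x, ρ 0 x * Real.log (ρ 0 x / π x)) +
        (1 / 2) * ∫ t in (0:ℝ)..T,
          (Psi (ρ t) (j t)
            - pairF (j t) (fun x y => Real.log (ρ t x * r x y / (ρ t y * r y x)))
            + PsiStar (ρ t) (fun x y => Real.log (ρ t x * r x y / (ρ t y * r y x)))))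
      - ((∑ x, ρ T x * Real.log (ρ T x / π x)) +
        (1 / 2) * ∫ t in (0:ℝ)..T,
          (Psi (ρ (T - t)) (fun x y => -(j (T - t) x y))
            - pairF (fun x y => -(j (T - t) x y))
                (fun x y => Real.log (ρ (T - t) x * r x y / (ρ (T - t) y * r y x)))
            + PsiStar (ρ (T - t))
                (fun x y => Real.log (ρ (T - t) x * r x y / (ρ (T - t) y * r y x)))))
      = (∑ x, ρ 0 x * Real.log (ρ 0 x / π x))
        - (∑ x, ρ T x * Real.log (ρ T x / π x))
        - ∫ t in (0:ℝ)..T,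
            pairF (j t) (fun x y => Real.log (ρ t x * r x y / (ρ t y * r y x))) := by
  
  have hpairneg : ∀ (u f : V → V → ℝ),
      pairF (fun x y => -(u x y)) f = - pairF u f := by
    intro u f
    simp [pairF, neg_mul, Finset.sum_neg_distrib, mul_comm]
  set Fn : ℝ → V → V → ℝ :=
    fun t x y => Real.log (ρ t x * r x y / (ρ t y * r y x)) with hFn
  have hrev :
      (∫ t in (0:ℝ)..T,
        (Psi (ρ (T - t)) (fun x y => -(j (T - t) x y))
          - pairF (fun x y => -(j (T - t) x y)) (Fn (T - t))
          + PsiStar (ρ (T - t)) (Fn (T - t))))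
      = ∫ t in (0:ℝ)..T,
        (Psi (ρ t) (j t) + pairF (j t) (Fn t) + PsiStar (ρ t) (Fn t)) := by
    have h1 : (fun t => Psi (ρ (T - t)) (fun x y => -(j (T - t) x y))
          - pairF (fun x y => -(j (T - t) x y)) (Fn (T - t))
          + PsiStar (ρ (T - t)) (Fn (T - t)))
        = fun t => (Psi (ρ (T - t)) (j (T - t)) + pairF (j (T - t)) (Fn (T - t))
            + PsiStar (ρ (T - t)) (Fn (T - t))) := by
      funext t
      rw [hPsiEven, hpairneg]
      ring
    rw [h1]
    have := intervalIntegral.integral_comp_sub_left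
      (a := (0:ℝ)) (b := T)
      (f := fun t => Psi (ρ t) (j t) + pairF (j t) (Fn t) + PsiStar (ρ t) (Fn t)) T
    simpa using this
  rw [hrev]
  have i1 : IntervalIntegrable (fun t => Psi (ρ t) (j t))
      MeasureTheory.volume 0 T := hc1.intervalIntegrable _ _
  have i2 : IntervalIntegrable (fun t => PsiStar (ρ t) (Fn t))
      MeasureTheory.volume 0 T := hc2.intervalIntegrable _ _
  have i3 : IntervalIntegrable (fun t => pairF (j t) (Fn t))
      MeasureTheory.volume 0 T := hc3.intervalIntegrable _ _
  have e1 : (∫ t in (0:ℝ)..T,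
        (Psi (ρ t) (j t) - pairF (j t) (Fn t) + PsiStar (ρ t) (Fn t)))
      = (∫ t in (0:ℝ)..T, Psi (ρ t) (j t))
        - (∫ t in (0:ℝ)..T, pairF (j t) (Fn t))
        + (∫ t in (0:ℝ)..T, PsiStar (ρ t) (Fn t)) := by
    rw [intervalIntegral.integral_add (i1.sub i3) i2,
      intervalIntegral.integral_sub i1 i3]
  have e2 : (∫ t in (0:ℝ)..T,
        (Psi (ρ t) (j t) + pairF (j t) (Fn t) + PsiStar (ρ t) (Fn t)))
      = (∫ t in (0:ℝ)..T, Psi (ρ t) (j t))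
        + (∫ t in (0:ℝ)..T, pairF (j t) (Fn t))
        + (∫ t in (0:ℝ)..T, PsiStar (ρ t) (Fn t)) := by
    rw [intervalIntegral.integral_add (i1.add i3) i2,
      intervalIntegral.integral_add i1 i3]
  rw [e1, e2]
  ring
end
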